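/- Let H be a real Hilbert space and let φ₁, …, φ_N be an orthonormal family in H (i.e., ⟨φ_i, φ_j⟩ = 1 if i = j and 0 otherwise). Let W be a finite-dimensional subspace of H with r := dim(W), and define ε := (1/N) · Σ_{i=1}^N inf_{g ∈ W} ‖g − φ_i‖². Then r ≥ N · (1 − ε). -/

import Mathlib

open Finset
open scoped RealInnerProductSpace

/-- **Dimension lower bound (orthonormal case).**
If `φ 1, …, φ N` is an orthonormal family in a real Hilbert space `H`, `W` is a
finite-dimensional subspace of `H` with `r = dim W`, and
`ε = (1/N) ∑ i, inf_{g ∈ W} ‖g - φ i‖²`, then `r ≥ N (1 - ε)`. -/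
theorem dimension_lower_bound_orthonormal
    {H : Type*} [NormedAddCommGroup H] [InnerProductSpace ℝ H] [CompleteSpace H]
    (N : ℕ) (φ : Fin N → H) (hφ : Orthonormal ℝ φ)
    (W : Submodule ℝ H) [FiniteDimensional ℝ W]
    (r : ℕ) (hr : r = Module.finrank ℝ W)
    (ε : ℝ)
    (hε : ε = (1 / (N : ℝ)) * ∑ i, ⨅ g : W, ‖(g : H) - φ i‖ ^ 2) :
    (r : ℝ) ≥ (N : ℝ) * (1 - ε) := by
  rcases Nat.eq_zero_or_pos N with hN | hN
  · subst hN; simp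
  set b := stdOrthonormalBasis ℝ W with hb
  -- per-index lower bound on the infimum
  have key : ∀ i, (1 : ℝ) - ‖(W.orthogonalProjectionOnto (φ i) : H)‖ ^ 2 ≤ ⨅ g : W, ‖(g : H) - φ i‖ ^ 2 := by
    intro i
    apply le_ciInf
    intro g
    have h1 : ‖φ i - (W.orthogonalProjectionOnto (φ i) : H)‖ ≤ ‖φ i - (g : H)‖ := by
      rw [← Submodule.starProjection_apply, Submodule.starProjection_minimal]
      exact ciInf_le ⟨0, fun x ⟨y, hy⟩ => hy ▸ norm_nonneg _⟩ g
    have h2 : ‖φ i - (W.orthogonalProjectionOnto (φ i) : H)‖ ^ 2 = 1 - ‖(W.orthogonalProjectionOnto (φ i) : H)‖ ^ 2 := by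
      have := Submodule.norm_sq_eq_add_norm_sq_projection (φ i) W
      have hiφ : ‖φ i‖ ^ 2 = 1 := by
        rw [hφ.1 i]; norm_num
      have hv : ((Wᗮ.orthogonalProjectionOnto (φ i) : W ᗮ) : H)
          = φ i - (W.orthogonalProjectionOnto (φ i) : H) := Submodule.starProjection_orthogonal_val _
      rw [hiφ] at this
      have hc1 : ‖((Wᗮ.orthogonalProjectionOnto (φ i) : Wᗮ) : H)‖
          = ‖Wᗮ.orthogonalProjectionOnto (φ i)‖ := rfl
      have hc2 : ‖((W.orthogonalProjectionOnto (φ i) : W) : H)‖ = ‖W.orthogonalProjectionOnto (φ i)‖ := rfl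
      rw [← hv, hc1, hc2]
      linarith
    calc (1 : ℝ) - ‖(W.orthogonalProjectionOnto (φ i) : H)‖ ^ 2 = ‖φ i - (W.orthogonalProjectionOnto (φ i) : H)‖ ^ 2 := h2.symm
      _ ≤ ‖φ i - (g : H)‖ ^ 2 := by
          apply pow_le_pow_left₀ (norm_nonneg _) h1
      _ = ‖(g : H) - φ i‖ ^ 2 := by rw [norm_sub_rev]
  -- sum of squared projection norms is at most r
  have hproj : ∀ i, ‖(W.orthogonalProjectionOnto (φ i) : H)‖ ^ 2 = ∑ j, (inner ℝ ((b j : H)) (φ i) : ℝ) ^ 2 := by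
    intro i
    have := b.sum_inner_mul_inner (W.orthogonalProjectionOnto (φ i)) (W.orthogonalProjectionOnto (φ i))
    have hnorm : (inner ℝ (W.orthogonalProjectionOnto (φ i)) (W.orthogonalProjectionOnto (φ i)) : ℝ) = ‖(W.orthogonalProjectionOnto (φ i) : H)‖ ^ 2 := by
      rw [Submodule.coe_inner, real_inner_self_eq_norm_sq]
    rw [hnorm] at this
    rw [← this]
    refine Finset.sum_congr rfl fun j _ => ?_
    have h1 : (inner ℝ (b j) (W.orthogonalProjectionOnto (φ i)) : ℝ)
        = (inner ℝ ((b j : H)) (φ i) : ℝ) :=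
      Submodule.inner_orthogonalProjectionOnto_eq_of_mem_left (K := W) (b j) (φ i)
    rw [real_inner_comm (b j) (W.orthogonalProjectionOnto (φ i)), h1, sq]
  have hsum : ∑ i, ‖(W.orthogonalProjectionOnto (φ i) : H)‖ ^ 2 ≤ (r : ℝ) := by
    calc ∑ i, ‖(W.orthogonalProjectionOnto (φ i) : H)‖ ^ 2 = ∑ i, ∑ j, (inner ℝ ((b j : H)) (φ i) : ℝ) ^ 2 := by
          exact Finset.sum_congr rfl fun i _ => hproj i
      _ = ∑ j, ∑ i, (inner ℝ ((b j : H)) (φ i) : ℝ) ^ 2 := Finset.sum_comm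
      _ ≤ ∑ _j : Fin (Module.finrank ℝ W), (1 : ℝ) := by
          apply Finset.sum_le_sum
          intro j _
          have := hφ.sum_inner_products_le (x := (b j : H)) (s := Finset.univ)
          have hbj : ‖(b j : H)‖ ^ 2 = 1 := by
            rw [show ‖(b j : H)‖ = ‖b j‖ from rfl, b.orthonormal.1 j]; norm_num
          calc ∑ i, (inner ℝ ((b j : H)) (φ i) : ℝ) ^ 2
              = ∑ i, ‖(inner ℝ (φ i) ((b j : H)) : ℝ)‖ ^ 2 := by
                refine Finset.sum_congr rfl fun i _ => ?_
                rw [Real.norm_eq_abs, sq_abs, real_inner_comm]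
            _ ≤ ‖(b j : H)‖ ^ 2 := this
            _ = 1 := hbj
      _ = (r : ℝ) := by simp [hr]
  -- combine
  have hNε : (N : ℝ) * ε = ∑ i, ⨅ g : W, ‖(g : H) - φ i‖ ^ 2 := by
    rw [hε]
    field_simp
  have hge : (N : ℝ) * ε ≥ ∑ i, ((1 : ℝ) - ‖(W.orthogonalProjectionOnto (φ i) : H)‖ ^ 2) := by
    rw [hNε]
    exact Finset.sum_le_sum fun i _ => key i
  have hsum2 : ∑ i, ((1 : ℝ) - ‖(W.orthogonalProjectionOnto (φ i) : H)‖ ^ 2)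
      = (N : ℝ) - ∑ i, ‖(W.orthogonalProjectionOnto (φ i) : H)‖ ^ 2 := by
    rw [Finset.sum_sub_distrib]
    simp
  rw [hsum2] at hge
  nlinarith [hsum, hge]
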